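/- arXiv:2109.07720 — 2 statements merged into one kernel-verified Lean document; each statement's English description precedes it below -/
import Mathlib

section
/- Let β ∈ (0,1), q ∈ (1,∞] with β > 1/q, and s ∈ [0,T). Suppose θ : Δ → ℝⁿ is measurable and there exist δ₀ ∈ (0, (T-s)/2), a modulus of continuity ω, and functions θ₀, θ₁ ∈ L^q(s,T) such that for every t ∈ [T-2δ₀, T]: |θ(t,τ) - θ(T,τ)| ≤ ω(T-t) θ₁(τ) and |θ(t,τ)| ≤ θ₀(τ) for a.e. τ ∈ [s,t). Then the function η(t) = ∫_s^t θ(t,τ)/(t-τ)^{1-β} dτ is continuous at t = T, i.e., η(t) → η(T) as t → T⁻. -/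
open MeasureTheory Real Set Filter
open scoped ENNReal Topology

theorem my_add_rpow {x y p : ℝ} (hx : 0 ≤ x) (hy : 0 ≤ y) (hp : 1 ≤ p) :
    x ^ p + y ^ p ≤ (x + y) ^ p := by
  lift x to NNReal using hx
  lift y to NNReal using hy
  exact_mod_cast NNReal.add_rpow_le_rpow_add x y hp

theorem my_rpow_sub {x y p : ℝ} (hx : 0 ≤ x) (hy : 0 ≤ y) (hp0 : 0 ≤ p) (hp1 : p ≤ 1) :
    (x + y) ^ p ≤ x ^ p + y ^ p := by
  lift x to NNReal using hx
  lift y to NNReal using hy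
  exact_mod_cast NNReal.rpow_add_le_add_rpow x y hp0 hp1

theorem my_int_shift {γ a b c : ℝ} (hγ : -1 < γ) (hab : a ≤ b) (hbc : b ≤ c) :
    ∫ τ in Set.Ioo a b, (c - τ) ^ γ =
      ((c - a) ^ (γ + 1) - (c - b) ^ (γ + 1)) / (γ + 1) := by
  rw [← MeasureTheory.integral_Ioc_eq_integral_Ioo, ← intervalIntegral.integral_of_le hab,
    intervalIntegral.integral_comp_sub_left (fun x => x ^ γ) c,
    integral_rpow (Or.inl hγ)]

theorem my_intgbl_shift {γ a b c : ℝ} (hγ : -1 < γ) (hab : a ≤ b) :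
    MeasureTheory.IntegrableOn (fun τ => (c - τ) ^ γ) (Set.Ioo a b) := by
  have h0 : IntervalIntegrable (fun x : ℝ => x ^ γ) volume (c - b) (c - a) :=
    intervalIntegral.intervalIntegrable_rpow' hγ
  have h := (h0.comp_sub_left c).symm
  simp only [sub_sub_cancel] at h
  exact ((intervalIntegrable_iff_integrableOn_Ioc_of_le hab).mp h).mono_set Set.Ioo_subset_Ioc_self

theorem my_lint_shift {γ a b c : ℝ} (hγ : -1 < γ) (hab : a ≤ b) (hbc : b ≤ c) :
    ∫⁻ τ in Set.Ioo a b, ENNReal.ofReal ((c - τ) ^ γ) =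
      ENNReal.ofReal (((c - a) ^ (γ + 1) - (c - b) ^ (γ + 1)) / (γ + 1)) := by
  rw [← my_int_shift hγ hab hbc,
    MeasureTheory.ofReal_integral_eq_lintegral_ofReal (my_intgbl_shift hγ hab)]
  filter_upwards [MeasureTheory.ae_restrict_mem measurableSet_Ioo] with τ hτ
  exact Real.rpow_nonneg (by linarith [hτ.2]) _

set_option maxHeartbeats 4000000 in
/-- Continuity at t = T of η(t) = ∫_s^t θ(t,τ)/(t-τ)^{1-β} dτ under a
    modulus-of-continuity assumption on θ near t = T. -/
theorem stmt_3 (n : ℕ) (T β : ℝ) (q : ℝ≥0∞)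
    (hT : 0 < T) (hβ : β ∈ Set.Ioo (0:ℝ) 1)
    (hq : 1 < q) (hβq : 1 / q < ENNReal.ofReal β)
    (s : ℝ) (hs : s ∈ Set.Ico 0 T)
    (θ : ℝ → ℝ → EuclideanSpace ℝ (Fin n))
    (hmeas : Measurable (Function.uncurry θ))
    (δ₀ : ℝ) (hδ₀ : δ₀ ∈ Set.Ioo 0 ((T - s) / 2))
    (ω : ℝ → ℝ) (hω_mono : StrictMonoOn ω (Set.Ici 0))
    (hω_cont : ContinuousOn ω (Set.Ici 0)) (hω0 : ω 0 = 0)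
    (hω_nonneg : ∀ x ∈ Set.Ici (0:ℝ), 0 ≤ ω x)
    (θ₀ θ₁ : ℝ → ℝ)
    (hθ₀q : MemLp θ₀ q (volume.restrict (Set.Ioc s T)))
    (hθ₁q : MemLp θ₁ q (volume.restrict (Set.Ioc s T)))
    (hbd1 : ∀ t ∈ Set.Icc (T - 2 * δ₀) T,
      ∀ᵐ τ ∂(volume.restrict (Set.Ico s t)), ‖θ t τ - θ T τ‖ ≤ ω (T - t) * θ₁ τ)
    (hbd0 : ∀ t ∈ Set.Icc (T - 2 * δ₀) T,
      ∀ᵐ τ ∂(volume.restrict (Set.Ico s t)), ‖θ t τ‖ ≤ θ₀ τ) :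
    Tendsto (fun t => ∫ τ in Set.Ioo s t, ((t - τ) ^ (β - 1)) • θ t τ)
      (nhdsWithin T (Set.Iio T))
      (nhds (∫ τ in Set.Ioo s T, ((T - τ) ^ (β - 1)) • θ T τ)) := by
  obtain ⟨hβ0, hβ1⟩ := hβ
  obtain ⟨hs0, hsT⟩ := hs
  obtain ⟨hδ0, hδT⟩ := hδ₀
  have hsδ : s < T - 2 * δ₀ := by linarith
  -- conjugate exponent
  have hq0 : q ≠ 0 := (zero_lt_one.trans hq).ne'
  have hqinv : q⁻¹ < 1 := ENNReal.inv_lt_one.mpr hq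
  set p : ℝ≥0∞ := (1 - q⁻¹)⁻¹ with hp_def
  have hp_inv : p⁻¹ = 1 - q⁻¹ := by rw [hp_def, inv_inv]
  have hpq1 : (1 : ℝ≥0∞) / 1 = 1 / p + 1 / q := by
    simp only [one_div, hp_inv]
    rw [tsub_add_cancel_of_le hqinv.le]
    simp
  have hHT : ENNReal.HolderTriple p q 1 := ⟨by simpa [one_div] using hpq1.symm⟩
  have h1q_ne : (1 : ℝ≥0∞) - q⁻¹ ≠ ∞ := (tsub_le_self.trans_lt ENNReal.one_lt_top).ne
  have h1q_ne0 : (1 : ℝ≥0∞) - q⁻¹ ≠ 0 := by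
    rw [ne_eq, tsub_eq_zero_iff_le]; exact not_le.mpr hqinv
  have hp0 : p ≠ 0 := by rw [hp_def]; exact ENNReal.inv_ne_zero.mpr h1q_ne
  have hptop : p ≠ ∞ := by rw [hp_def]; exact ENNReal.inv_ne_top.mpr h1q_ne0
  set pr : ℝ := p.toReal with hpr_def
  have hpr_pos : 0 < pr := ENNReal.toReal_pos hp0 hptop
  have hp1 : (1 : ℝ≥0∞) ≤ p := by
    rw [← ENNReal.inv_le_one, hp_inv]; exact tsub_le_self
  have hpr1 : 1 ≤ pr := by
    have := ENNReal.toReal_mono hptop hp1; simpa using this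
  have hqβ : (q⁻¹).toReal < β := by
    have h1 : q⁻¹ ≠ ∞ := by simp [hq0]
    have := (ENNReal.lt_ofReal_iff_toReal_lt (by simpa [one_div] using h1)).mp hβq
    simpa [one_div] using this
  have hprinv : pr⁻¹ = 1 - (q⁻¹).toReal := by
    rw [hpr_def, ← ENNReal.toReal_inv, hp_inv,
      ENNReal.toReal_sub_of_le hqinv.le ENNReal.one_ne_top, ENNReal.toReal_one]
  set γ : ℝ := (β - 1) * pr with hγ_def
  have hγ : -1 < γ := by
    have h2 : (1 - β) * pr < 1 := by
      have h3 : 1 - β < pr⁻¹ := by rw [hprinv]; linarith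
      calc (1 - β) * pr < pr⁻¹ * pr := mul_lt_mul_of_pos_right h3 hpr_pos
        _ = 1 := inv_mul_cancel₀ hpr_pos.ne'
    nlinarith
  set κ : ℝ := γ + 1 with hκ_def
  have hκ : 0 < κ := by simp only [hκ_def]; linarith
  have hκ1 : κ ≤ 1 := by nlinarith [hpr_pos]
  -- measurability
  have hθmeas : ∀ t : ℝ, Measurable (θ t) := fun t => hmeas.of_uncurry_left
  have hθaesm : ∀ (t : ℝ) (μ : Measure ℝ), AEStronglyMeasurable (θ t) μ := fun t μ =>
    (hθmeas t).aestronglyMeasurable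
  have hker_meas : ∀ c : ℝ, Measurable (fun τ : ℝ => (c - τ) ^ (β - 1)) := fun c => by
    fun_prop
  -- kernel lintegral computation
  have hker_lint : ∀ a b c : ℝ, a ≤ b → b ≤ c →
      (∫⁻ τ in Set.Ioo a b, ‖(c - τ) ^ (β - 1)‖ₑ ^ pr) =
        ENNReal.ofReal (((c - a) ^ κ - (c - b) ^ κ) / κ) := by
    intro a b c hab hbc
    rw [hκ_def, ← my_lint_shift (γ := γ) hγ hab hbc]
    refine setLIntegral_congr_fun measurableSet_Ioo (fun τ hτ => ?_)
    have h1 : (0 : ℝ) ≤ c - τ := by linarith [hτ.2]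
    rw [Real.enorm_eq_ofReal (Real.rpow_nonneg h1 _),
      ENNReal.ofReal_rpow_of_nonneg (Real.rpow_nonneg h1 _) hpr_pos.le,
      hγ_def, Real.rpow_mul h1]
  have hker_eLp : ∀ a b c : ℝ, a ≤ b → b ≤ c →
      eLpNorm (fun τ => (c - τ) ^ (β - 1)) p (volume.restrict (Set.Ioo a b)) =
        ENNReal.ofReal ((((c - a) ^ κ - (c - b) ^ κ) / κ) ^ (1 / pr)) := by
    intro a b c hab hbc
    have hnn : 0 ≤ ((c - a) ^ κ - (c - b) ^ κ) / κ := by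
      apply div_nonneg _ hκ.le
      have : (c - b) ^ κ ≤ (c - a) ^ κ :=
        Real.rpow_le_rpow (by linarith) (by linarith) hκ.le
      linarith
    rw [eLpNorm_eq_lintegral_rpow_enorm_toReal hp0 hptop, hker_lint a b c hab hbc,
      ← hpr_def, ENNReal.ofReal_rpow_of_nonneg hnn (by positivity)]
  set M : ℝ≥0∞ := ENNReal.ofReal (((T - s) ^ κ / κ) ^ (1 / pr)) with hM_def
  have hM_ne : M ≠ ∞ := ENNReal.ofReal_ne_top
  have hker_le_M : ∀ t : ℝ, s ≤ t → t ≤ T →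
      eLpNorm (fun τ => (t - τ) ^ (β - 1)) p (volume.restrict (Set.Ioo s t)) ≤ M := by
    intro t h1 h2
    rw [hker_eLp s t t h1 le_rfl, hM_def]
    apply ENNReal.ofReal_le_ofReal
    rw [sub_self, Real.zero_rpow hκ.ne', sub_zero]
    have h3 : (t - s) ^ κ ≤ (T - s) ^ κ := Real.rpow_le_rpow (by linarith) (by linarith) hκ.le
    have h4 : (t - s) ^ κ / κ ≤ (T - s) ^ κ / κ := by gcongr
    exact Real.rpow_le_rpow (div_nonneg (Real.rpow_nonneg (by linarith) _) hκ.le) h4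
      (by positivity)
  -- MemLp facts
  have hmem₀ : ∀ S : Set ℝ, S ⊆ Set.Ioc s T → MemLp θ₀ q (volume.restrict S) := fun S hS =>
    hθ₀q.mono_measure (Measure.restrict_mono hS le_rfl)
  have hmem₁ : ∀ S : Set ℝ, S ⊆ Set.Ioc s T → MemLp θ₁ q (volume.restrict S) := fun S hS =>
    hθ₁q.mono_measure (Measure.restrict_mono hS le_rfl)
  have hmemθ : ∀ t, T - 2 * δ₀ ≤ t → t ≤ T → s < t →
      MemLp (θ t) q (volume.restrict (Set.Ioo s t)) := by
    intro t ht1 ht2 hst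
    have hb := ae_restrict_of_ae_restrict_of_subset Set.Ioo_subset_Ico_self
      (hbd0 t ⟨ht1, ht2⟩)
    refine MemLp.of_le (hmem₀ _ fun τ hτ => ⟨hτ.1, hτ.2.le.trans ht2⟩) (hθaesm t _) ?_
    filter_upwards [hb] with τ h
    exact h.trans (le_abs_self _)
  have hmemθT : ∀ (S : Set ℝ), S ⊆ Set.Ioo s T → MemLp (θ T) q (volume.restrict S) := by
    intro S hS
    have hb := ae_restrict_of_ae_restrict_of_subset
      (hS.trans Set.Ioo_subset_Ico_self) (hbd0 T ⟨by linarith, le_rfl⟩)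
    refine MemLp.of_le (hmem₀ _ (hS.trans Set.Ioo_subset_Ioc_self)) (hθaesm T _) ?_
    filter_upwards [hb] with τ h
    exact h.trans (le_abs_self _)
  -- integrability of the integrands
  have hker_mem : ∀ a b c : ℝ, a ≤ b → b ≤ c →
      MemLp (fun τ => (c - τ) ^ (β - 1)) p (volume.restrict (Set.Ioo a b)) := by
    intro a b c hab hbc
    exact ⟨(hker_meas c).aestronglyMeasurable, by
      rw [hker_eLp a b c hab hbc]; exact ENNReal.ofReal_lt_top⟩
  have hint : ∀ t, T - 2 * δ₀ ≤ t → t ≤ T → s < t →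
      IntegrableOn (fun τ => ((t - τ) ^ (β - 1)) • θ t τ) (Set.Ioo s t) := by
    intro t ht1 ht2 hst
    have h := (hmemθ t ht1 ht2 hst).smul (hker_mem s t t hst.le le_rfl) (hpqr := hHT)
    exact memLp_one_iff_integrable.mp h
  have hintT : IntegrableOn (fun τ => ((T - τ) ^ (β - 1)) • θ T τ) (Set.Ioo s T) := by
    have h := (hmemθT _ (subset_refl _)).smul (hker_mem s T T hsT.le le_rfl) (hpqr := hHT)
    exact memLp_one_iff_integrable.mp h
  set N₀ : ℝ≥0∞ := eLpNorm θ₀ q (volume.restrict (Set.Ioc s T)) with hN₀_def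
  set N₁ : ℝ≥0∞ := eLpNorm θ₁ q (volume.restrict (Set.Ioc s T)) with hN₁_def
  have hN₀_ne : N₀ ≠ ∞ := hθ₀q.2.ne
  have hN₁_ne : N₁ ≠ ∞ := hθ₁q.2.ne
  -- the admissible φ/ψ functions
  set ψ : ℝ → ℝ := fun t => (((t - s) ^ κ - ((T - s) ^ κ - (T - t) ^ κ)) / κ) ^ (1 / pr)
    with hψ_def
  -- eLpNorm bound for the kernel difference
  have hdiff_eLp : ∀ t, s < t → t < T →
      eLpNorm (fun τ => (t - τ) ^ (β - 1) - (T - τ) ^ (β - 1)) p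
        (volume.restrict (Set.Ioo s t)) ≤ ENNReal.ofReal (ψ t) := by
    intro t hst htT
    have hinn_nn : 0 ≤ ((t - s) ^ κ - ((T - s) ^ κ - (T - t) ^ κ)) / κ := by
      apply div_nonneg _ hκ.le
      have h := my_rpow_sub (x := t - s) (y := T - t) (by linarith) (by linarith) hκ.le hκ1
      have he : t - s + (T - t) = T - s := by ring
      rw [he] at h
      linarith
    rw [eLpNorm_eq_lintegral_rpow_enorm_toReal hp0 hptop, ← hpr_def]
    have step1 : (∫⁻ τ in Set.Ioo s t, ‖(t - τ) ^ (β - 1) - (T - τ) ^ (β - 1)‖ₑ ^ pr)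
        ≤ ∫⁻ τ in Set.Ioo s t, ENNReal.ofReal ((t - τ) ^ γ - (T - τ) ^ γ) := by
      refine lintegral_mono_ae ?_
      filter_upwards [ae_restrict_mem measurableSet_Ioo] with τ hτ
      have h1 : (0 : ℝ) < t - τ := by linarith [hτ.2]
      have h2 : t - τ ≤ T - τ := by linarith
      have hyx : (T - τ) ^ (β - 1) ≤ (t - τ) ^ (β - 1) :=
        Real.rpow_le_rpow_of_nonpos h1 h2 (by linarith)
      have hy0 : (0 : ℝ) ≤ (T - τ) ^ (β - 1) := Real.rpow_nonneg (by linarith) _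
      rw [Real.enorm_eq_ofReal (by linarith),
        ENNReal.ofReal_rpow_of_nonneg (by linarith) hpr_pos.le]
      apply ENNReal.ofReal_le_ofReal
      have key := my_add_rpow (x := (t - τ) ^ (β - 1) - (T - τ) ^ (β - 1))
        (y := (T - τ) ^ (β - 1)) (by linarith) hy0 hpr1
      rw [sub_add_cancel] at key
      have e1 : ((t - τ) ^ (β - 1)) ^ pr = (t - τ) ^ γ := by
        rw [hγ_def, Real.rpow_mul h1.le]
      have e2 : ((T - τ) ^ (β - 1)) ^ pr = (T - τ) ^ γ := by
        rw [hγ_def, Real.rpow_mul (by linarith : (0:ℝ) ≤ T - τ)]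
      rw [e1, e2] at key
      linarith
    have step2 : (∫⁻ τ in Set.Ioo s t, ENNReal.ofReal ((t - τ) ^ γ - (T - τ) ^ γ))
        = ENNReal.ofReal (((t - s) ^ κ - ((T - s) ^ κ - (T - t) ^ κ)) / κ) := by
      have hi1 : IntegrableOn (fun τ => (t - τ) ^ γ) (Set.Ioo s t) :=
        my_intgbl_shift hγ hst.le
      have hi2 : IntegrableOn (fun τ => (T - τ) ^ γ) (Set.Ioo s t) :=
        my_intgbl_shift hγ hst.le
      have hnn : 0 ≤ᵐ[volume.restrict (Set.Ioo s t)]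
          fun τ => (t - τ) ^ γ - (T - τ) ^ γ := by
        filter_upwards [ae_restrict_mem measurableSet_Ioo] with τ hτ
        have h1 : (0 : ℝ) < t - τ := by linarith [hτ.2]
        have : (T - τ) ^ γ ≤ (t - τ) ^ γ :=
          Real.rpow_le_rpow_of_nonpos h1 (by linarith) (by linarith)
        simp only [Pi.zero_apply]; linarith
      have hi12 : IntegrableOn (fun τ => (t - τ) ^ γ - (T - τ) ^ γ) (Set.Ioo s t) :=
        hi1.sub hi2
      rw [← MeasureTheory.ofReal_integral_eq_lintegral_ofReal hi12 hnn]
      congr 1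
      rw [integral_sub hi1 hi2, my_int_shift hγ hst.le le_rfl,
        my_int_shift hγ hst.le htT.le, ← hκ_def]
      rw [sub_self, Real.zero_rpow hκ.ne', sub_zero]
      ring
    calc (∫⁻ τ in Set.Ioo s t,
          ‖(t - τ) ^ (β - 1) - (T - τ) ^ (β - 1)‖ₑ ^ pr) ^ (1 / pr)
        ≤ (ENNReal.ofReal (((t - s) ^ κ - ((T - s) ^ κ - (T - t) ^ κ)) / κ)) ^ (1 / pr) := by
          rw [← step2]; exact ENNReal.rpow_le_rpow step1 (by positivity)
      _ = ENNReal.ofReal (ψ t) := by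
          rw [hψ_def, ENNReal.ofReal_rpow_of_nonneg hinn_nn (by positivity)]
  -- tail convergence
  set g₀ : ℝ → ℝ := fun τ => ‖((T - τ) ^ (β - 1)) • θ T τ‖ with hg₀_def
  have hg₀meas : Measurable g₀ := ((hker_meas T).smul (hθmeas T)).norm
  have hg₀int : IntegrableOn g₀ (Set.Ioo s T) := hintT.norm
  have htail : Tendsto (fun t => ∫ τ in Set.Ioo t T, g₀ τ) (𝓝[<] T) (𝓝 0) := by
    have hkey : ∀ᶠ t in 𝓝[<] T, (∫ τ in Set.Ioo t T, g₀ τ)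
        = ∫ τ in Set.Ioo s T, Set.indicator (Set.Ioo t T) g₀ τ := by
      filter_upwards [Ioo_mem_nhdsLT_of_mem (Set.mem_Ioc.mpr ⟨hsT, le_rfl⟩)] with t ht
      rw [MeasureTheory.setIntegral_indicator measurableSet_Ioo, Set.Ioo_inter_Ioo,
        max_eq_right ht.1.le, min_self]
    rw [tendsto_congr' hkey]
    have h0 : (0 : ℝ) = ∫ τ in Set.Ioo s T, (0 : ℝ) := by simp
    rw [h0]
    apply tendsto_integral_filter_of_dominated_convergence g₀
    · exact Eventually.of_forall fun t =>
        (hg₀meas.indicator measurableSet_Ioo).aestronglyMeasurable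
    · refine Eventually.of_forall fun t => Eventually.of_forall fun τ => ?_
      rw [Real.norm_eq_abs, abs_of_nonneg (Set.indicator_nonneg
        (fun x _ => norm_nonneg _) τ)]
      exact Set.indicator_le_self' (fun x _ => norm_nonneg _) τ
    · exact hg₀int
    · refine Eventually.of_forall fun τ => ?_
      rcases lt_or_ge τ T with hτ | hτ
      · have hev : ∀ᶠ t in 𝓝[<] T, τ < t :=
          eventually_nhdsWithin_of_eventually_nhds (eventually_gt_nhds hτ)
        refine Tendsto.congr' ?_ tendsto_const_nhds
        filter_upwards [hev] with t ht
        exact (Set.indicator_of_notMem (fun h => absurd h.1 (not_lt.mpr ht.le)) g₀).symm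
      · refine Tendsto.congr' ?_ tendsto_const_nhds
        exact Eventually.of_forall fun t =>
          (Set.indicator_of_notMem (fun h => absurd h.2 (not_lt.mpr hτ)) g₀).symm
  -- main eventual bound
  set η : ℝ → EuclideanSpace ℝ (Fin n) :=
    fun t => ∫ τ in Set.Ioo s t, ((t - τ) ^ (β - 1)) • θ t τ with hη_def
  set S : ℝ → ℝ≥0∞ := fun t => ENNReal.ofReal (ω (T - t)) * (M * N₁)
    + ENNReal.ofReal (ψ t) * N₀ + ENNReal.ofReal (∫ τ in Set.Ioo t T, g₀ τ) with hS_def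
  have hmain : ∀ᶠ t in 𝓝[<] T, ENNReal.ofReal ‖η t - η T‖ ≤ S t := by
    filter_upwards [Ioo_mem_nhdsLT_of_mem
      (Set.mem_Ioc.mpr ⟨(by linarith : T - δ₀ < T), le_rfl⟩)] with t ht
    obtain ⟨ht1, ht2⟩ := ht
    have hst : s < t := by linarith
    have ht2δ : T - 2 * δ₀ ≤ t := by linarith
    have hsub_t : Set.Ioo s t ⊆ Set.Ioc s T := fun τ hτ => ⟨hτ.1, hτ.2.le.trans ht2.le⟩
    have hint_t := hint t ht2δ ht2.le hst
    have hintT_st : IntegrableOn (fun τ => ((T - τ) ^ (β - 1)) • θ T τ) (Set.Ioo s t) :=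
      hintT.mono_set (Set.Ioo_subset_Ioo le_rfl ht2.le)
    have hintT_tT : IntegrableOn (fun τ => ((T - τ) ^ (β - 1)) • θ T τ) (Set.Ioo t T) :=
      hintT.mono_set (Set.Ioo_subset_Ioo hst.le le_rfl)
    have hintT_ct : IntegrableOn (fun τ => ((T - τ) ^ (β - 1)) • θ T τ) (Set.Ioc s t) := by
      rw [MeasureTheory.IntegrableOn, Measure.restrict_congr_set Ioo_ae_eq_Ioc.symm]
      exact hintT_st
    -- split η T
    have hsplit : η T = (∫ τ in Set.Ioo s t, ((T - τ) ^ (β - 1)) • θ T τ)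
        + ∫ τ in Set.Ioo t T, ((T - τ) ^ (β - 1)) • θ T τ := by
      rw [hη_def]
      have hu : Set.Ioc s t ∪ Set.Ioo t T = Set.Ioo s T :=
        Set.Ioc_union_Ioo_eq_Ioo hst.le ht2
      have hd : Disjoint (Set.Ioc s t) (Set.Ioo t T) := by
        rw [Set.disjoint_left]
        rintro x ⟨_, hx⟩ ⟨hx', _⟩
        exact absurd hx' (not_lt.mpr hx)
      calc (∫ τ in Set.Ioo s T, ((T - τ) ^ (β - 1)) • θ T τ)
          = ∫ τ in Set.Ioc s t ∪ Set.Ioo t T, ((T - τ) ^ (β - 1)) • θ T τ := by rw [hu]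
        _ = (∫ τ in Set.Ioc s t, ((T - τ) ^ (β - 1)) • θ T τ)
            + ∫ τ in Set.Ioo t T, ((T - τ) ^ (β - 1)) • θ T τ :=
            MeasureTheory.setIntegral_union hd measurableSet_Ioo hintT_ct hintT_tT
        _ = _ := by rw [MeasureTheory.integral_Ioc_eq_integral_Ioo]
    have hsub : η t - η T
        = (∫ τ in Set.Ioo s t, (((t - τ) ^ (β - 1)) • θ t τ - ((T - τ) ^ (β - 1)) • θ T τ))
          - ∫ τ in Set.Ioo t T, ((T - τ) ^ (β - 1)) • θ T τ := by
      rw [hsplit, integral_sub hint_t hintT_st, hη_def]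
      abel
    -- bound the main integral in lintegral form
    have hL : (∫⁻ τ in Set.Ioo s t,
          ‖((t - τ) ^ (β - 1)) • θ t τ - ((T - τ) ^ (β - 1)) • θ T τ‖ₑ)
        ≤ ENNReal.ofReal (ω (T - t)) * (M * N₁) + ENNReal.ofReal (ψ t) * N₀ := by
      have hωnn : 0 ≤ ω (T - t) := hω_nonneg _ (by simp; linarith)
      have hae : ∀ᵐ τ ∂(volume.restrict (Set.Ioo s t)),
          ‖((t - τ) ^ (β - 1)) • θ t τ - ((T - τ) ^ (β - 1)) • θ T τ‖ₑ
          ≤ ENNReal.ofReal (ω (T - t)) * ‖(t - τ) ^ (β - 1) * θ₁ τ‖ₑ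
            + ‖((t - τ) ^ (β - 1) - (T - τ) ^ (β - 1)) * θ₀ τ‖ₑ := by
        have hb1 := ae_restrict_of_ae_restrict_of_subset Set.Ioo_subset_Ico_self
          (hbd1 t ⟨ht2δ, ht2.le⟩)
        have hb0 := ae_restrict_of_ae_restrict_of_subset
          ((Set.Ioo_subset_Ioo le_rfl ht2.le).trans Set.Ioo_subset_Ico_self)
          (hbd0 T ⟨by linarith, le_rfl⟩)
        filter_upwards [ae_restrict_mem measurableSet_Ioo, hb1, hb0] with τ hτ h1 h0
        have hk1 : (0 : ℝ) < t - τ := by linarith [hτ.2]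
        have hk1nn : (0 : ℝ) ≤ (t - τ) ^ (β - 1) := Real.rpow_nonneg hk1.le _
        have hkTnn : (0 : ℝ) ≤ (T - τ) ^ (β - 1) := Real.rpow_nonneg (by linarith) _
        have hkd : (T - τ) ^ (β - 1) ≤ (t - τ) ^ (β - 1) :=
          Real.rpow_le_rpow_of_nonpos hk1 (by linarith) (by linarith)
        have hreal : ‖((t - τ) ^ (β - 1)) • θ t τ - ((T - τ) ^ (β - 1)) • θ T τ‖
            ≤ ω (T - t) * ((t - τ) ^ (β - 1) * |θ₁ τ|)
              + ((t - τ) ^ (β - 1) - (T - τ) ^ (β - 1)) * θ₀ τ := by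
          have hdec : ((t - τ) ^ (β - 1)) • θ t τ - ((T - τ) ^ (β - 1)) • θ T τ
              = ((t - τ) ^ (β - 1)) • (θ t τ - θ T τ)
                + ((t - τ) ^ (β - 1) - (T - τ) ^ (β - 1)) • θ T τ := by
            rw [smul_sub, sub_smul]; abel
          rw [hdec]
          refine (norm_add_le _ _).trans ?_
          rw [norm_smul, norm_smul, Real.norm_eq_abs, Real.norm_eq_abs,
            abs_of_nonneg hk1nn, abs_of_nonneg (by linarith)]
          have hθ0nn : 0 ≤ θ₀ τ := le_trans (norm_nonneg _) h0
          have e1 : (t - τ) ^ (β - 1) * ‖θ t τ - θ T τ‖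
              ≤ ω (T - t) * ((t - τ) ^ (β - 1) * |θ₁ τ|) := by
            have : ‖θ t τ - θ T τ‖ ≤ ω (T - t) * |θ₁ τ| :=
              h1.trans (by
                rcases le_or_gt 0 (θ₁ τ) with h | h
                · rw [abs_of_nonneg h]
                · nlinarith [abs_nonneg (θ₁ τ)])
            nlinarith [norm_nonneg (θ t τ - θ T τ)]
          have e2 : ((t - τ) ^ (β - 1) - (T - τ) ^ (β - 1)) * ‖θ T τ‖
              ≤ ((t - τ) ^ (β - 1) - (T - τ) ^ (β - 1)) * θ₀ τ := by
            apply mul_le_mul_of_nonneg_left h0 (by linarith)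
          linarith
        calc ‖((t - τ) ^ (β - 1)) • θ t τ - ((T - τ) ^ (β - 1)) • θ T τ‖ₑ
            = ENNReal.ofReal ‖((t - τ) ^ (β - 1)) • θ t τ - ((T - τ) ^ (β - 1)) • θ T τ‖ :=
              (ofReal_norm _).symm
          _ ≤ ENNReal.ofReal (ω (T - t) * ((t - τ) ^ (β - 1) * |θ₁ τ|)
              + ((t - τ) ^ (β - 1) - (T - τ) ^ (β - 1)) * θ₀ τ) := by
              exact ENNReal.ofReal_le_ofReal hreal
          _ ≤ ENNReal.ofReal (ω (T - t) * ((t - τ) ^ (β - 1) * |θ₁ τ|))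
              + ENNReal.ofReal (((t - τ) ^ (β - 1) - (T - τ) ^ (β - 1)) * θ₀ τ) :=
              ENNReal.ofReal_add_le
          _ ≤ ENNReal.ofReal (ω (T - t)) * ‖(t - τ) ^ (β - 1) * θ₁ τ‖ₑ
              + ‖((t - τ) ^ (β - 1) - (T - τ) ^ (β - 1)) * θ₀ τ‖ₑ := by
              gcongr
              · rw [ENNReal.ofReal_mul hωnn]
                gcongr
                rw [Real.enorm_eq_ofReal_abs, abs_mul, abs_of_nonneg hk1nn]
              · exact Real.ofReal_le_enorm _
      have haem₁ : AEMeasurable (fun τ => ‖(t - τ) ^ (β - 1) * θ₁ τ‖ₑ)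
          (volume.restrict (Set.Ioo s t)) := by
        have : AEMeasurable θ₁ (volume.restrict (Set.Ioo s t)) :=
          ((hmem₁ _ hsub_t).aestronglyMeasurable).aemeasurable
        exact (((hker_meas t).aemeasurable.mul this)).enorm
      calc (∫⁻ τ in Set.Ioo s t,
            ‖((t - τ) ^ (β - 1)) • θ t τ - ((T - τ) ^ (β - 1)) • θ T τ‖ₑ)
          ≤ ∫⁻ τ in Set.Ioo s t,
            (ENNReal.ofReal (ω (T - t)) * ‖(t - τ) ^ (β - 1) * θ₁ τ‖ₑ
              + ‖((t - τ) ^ (β - 1) - (T - τ) ^ (β - 1)) * θ₀ τ‖ₑ) :=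
            lintegral_mono_ae hae
        _ = ENNReal.ofReal (ω (T - t))
              * (∫⁻ τ in Set.Ioo s t, ‖(t - τ) ^ (β - 1) * θ₁ τ‖ₑ)
            + ∫⁻ τ in Set.Ioo s t,
                ‖((t - τ) ^ (β - 1) - (T - τ) ^ (β - 1)) * θ₀ τ‖ₑ := by
            rw [lintegral_add_left' (haem₁.const_mul _),
              lintegral_const_mul' _ _ ENNReal.ofReal_ne_top]
        _ ≤ ENNReal.ofReal (ω (T - t)) * (M * N₁) + ENNReal.ofReal (ψ t) * N₀ := by
            gcongr
            · -- Hölder for the first term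
              have hH := eLpNorm_smul_le_mul_eLpNorm
                (hθ₁q.aestronglyMeasurable.mono_measure
                  (Measure.restrict_mono hsub_t le_rfl))
                ((hker_meas t).aestronglyMeasurable
                  (μ := volume.restrict (Set.Ioo s t))) (hpqr := hHT)
              rw [eLpNorm_one_eq_lintegral_enorm] at hH
              refine le_trans (le_of_eq ?_) (hH.trans ?_)
              · rfl
              · exact mul_le_mul' (hker_le_M t hst.le ht2.le)
                  (eLpNorm_mono_measure _ (Measure.restrict_mono
                    hsub_t le_rfl))
            · -- Hölder for the second term
              have hH := eLpNorm_smul_le_mul_eLpNorm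
                (hθ₀q.aestronglyMeasurable.mono_measure
                  (Measure.restrict_mono hsub_t le_rfl))
                (((hker_meas t).sub (hker_meas T)).aestronglyMeasurable
                  (μ := volume.restrict (Set.Ioo s t))) (hpqr := hHT)
              rw [eLpNorm_one_eq_lintegral_enorm] at hH
              refine le_trans (le_of_eq ?_) (hH.trans ?_)
              · rfl
              · exact mul_le_mul' (hdiff_eLp t hst ht2)
                  (eLpNorm_mono_measure _ (Measure.restrict_mono
                    hsub_t le_rfl))
    -- assemble
    calc ENNReal.ofReal ‖η t - η T‖
        ≤ ENNReal.ofReal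
            (‖∫ τ in Set.Ioo s t, (((t - τ) ^ (β - 1)) • θ t τ - ((T - τ) ^ (β - 1)) • θ T τ)‖
             + ‖∫ τ in Set.Ioo t T, ((T - τ) ^ (β - 1)) • θ T τ‖) := by
          rw [hsub]; exact ENNReal.ofReal_le_ofReal (norm_sub_le _ _)
      _ ≤ ENNReal.ofReal
            ‖∫ τ in Set.Ioo s t, (((t - τ) ^ (β - 1)) • θ t τ - ((T - τ) ^ (β - 1)) • θ T τ)‖
          + ENNReal.ofReal ‖∫ τ in Set.Ioo t T, ((T - τ) ^ (β - 1)) • θ T τ‖ :=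
          ENNReal.ofReal_add_le
      _ ≤ (∫⁻ τ in Set.Ioo s t,
            ‖((t - τ) ^ (β - 1)) • θ t τ - ((T - τ) ^ (β - 1)) • θ T τ‖ₑ)
          + ENNReal.ofReal (∫ τ in Set.Ioo t T, g₀ τ) := by
          gcongr
          · rw [ofReal_norm]
            exact enorm_integral_le_lintegral_enorm _
          · exact norm_integral_le_integral_norm _
      _ ≤ ENNReal.ofReal (ω (T - t)) * (M * N₁) + ENNReal.ofReal (ψ t) * N₀
          + ENNReal.ofReal (∫ τ in Set.Ioo t T, g₀ τ) := by gcongr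
      _ = S t := rfl
  -- the bound tends to 0
  have hS0 : Tendsto S (𝓝[<] T) (𝓝 0) := by
    have T1 : Tendsto (fun t => ENNReal.ofReal (ω (T - t)) * (M * N₁)) (𝓝[<] T) (𝓝 0) := by
      have hTt : Tendsto (fun t => T - t) (𝓝[<] T) (𝓝[Set.Ici 0] 0) := by
        apply tendsto_nhdsWithin_of_tendsto_nhds_of_eventually_within
        · have : Tendsto (fun t : ℝ => T - t) (𝓝 T) (𝓝 (T - T)) :=
            (continuous_const.sub continuous_id).tendsto T
          rw [sub_self] at this
          exact this.mono_left nhdsWithin_le_nhds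
        · filter_upwards [self_mem_nhdsWithin] with t ht
          simp only [Set.mem_Iio] at ht
          simp only [Set.mem_Ici]; linarith
      have hω' : Tendsto (fun t => ω (T - t)) (𝓝[<] T) (𝓝 0) := by
        have := (hω_cont 0 (Set.self_mem_Ici)).tendsto.comp hTt
        rwa [hω0] at this
      have : Tendsto (fun t => ENNReal.ofReal (ω (T - t))) (𝓝[<] T) (𝓝 0) := by
        have := (ENNReal.continuous_ofReal.tendsto 0).comp hω'
        simpa [Function.comp_def] using this
      simpa using ENNReal.Tendsto.mul_const this
        (Or.inr (ENNReal.mul_ne_top hM_ne hN₁_ne))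
    have T2 : Tendsto (fun t => ENNReal.ofReal (ψ t) * N₀) (𝓝[<] T) (𝓝 0) := by
      have hψ0 : Tendsto ψ (𝓝[<] T) (𝓝 0) := by
        have cin1 : Tendsto (fun t : ℝ => t - s) (𝓝 T) (𝓝 (T - s)) := by
          exact ((continuous_id.sub continuous_const :
            Continuous fun t : ℝ => t - s)).tendsto T
        have cin2 : Tendsto (fun t : ℝ => T - t) (𝓝 T) (𝓝 0) := by
          simpa only [sub_self] using (tendsto_const_nhds.sub tendsto_id :
            Tendsto (fun t : ℝ => T - t) (𝓝 T) (𝓝 (T - T)))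
        have c1 : Tendsto (fun t : ℝ => (t - s) ^ κ) (𝓝 T) (𝓝 ((T - s) ^ κ)) :=
          (Real.continuousAt_rpow_const _ _ (Or.inl (sub_ne_zero.mpr hsT.ne'))).tendsto.comp cin1
        have c2 : Tendsto (fun t : ℝ => (T - t) ^ κ) (𝓝 T) (𝓝 ((0 : ℝ) ^ κ)) :=
          (Real.continuousAt_rpow_const _ _ (Or.inr hκ.le)).tendsto.comp cin2
        rw [Real.zero_rpow hκ.ne'] at c2
        have cinner : Tendsto (fun t => ((t - s) ^ κ - ((T - s) ^ κ - (T - t) ^ κ)) / κ)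
            (𝓝 T) (𝓝 0) := by
          have hmid : Tendsto (fun t : ℝ => (T - s) ^ κ - (T - t) ^ κ) (𝓝 T)
              (𝓝 ((T - s) ^ κ - 0)) := (tendsto_const_nhds (x := (T - s) ^ κ)).sub c2
          have := ((c1.sub hmid).div_const κ)
          simpa using this
        have crpow : ContinuousAt (fun x : ℝ => x ^ (1 / pr)) 0 :=
          Real.continuousAt_rpow_const _ _ (Or.inr (by positivity))
        have hfin := crpow.tendsto.comp cinner
        simp only [Function.comp_def] at hfin
        rw [Real.zero_rpow (by positivity : (1 : ℝ) / pr ≠ 0)] at hfin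
        exact hfin.mono_left nhdsWithin_le_nhds
      have : Tendsto (fun t => ENNReal.ofReal (ψ t)) (𝓝[<] T) (𝓝 0) := by
        have := (ENNReal.continuous_ofReal.tendsto 0).comp hψ0
        simpa [Function.comp_def] using this
      simpa using ENNReal.Tendsto.mul_const this (Or.inr hN₀_ne)
    have T3 : Tendsto (fun t => ENNReal.ofReal (∫ τ in Set.Ioo t T, g₀ τ)) (𝓝[<] T) (𝓝 0) := by
      have := (ENNReal.continuous_ofReal.tendsto 0).comp htail
      simpa [Function.comp_def] using this
    have := (T1.add T2).add T3
    simpa using this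
  -- squeeze
  have h1 : Tendsto (fun t => ENNReal.ofReal ‖η t - η T‖) (𝓝[<] T) (𝓝 0) :=
    tendsto_of_tendsto_of_tendsto_of_le_of_le' tendsto_const_nhds hS0
      (Eventually.of_forall fun _ => bot_le) hmain
  have h2 : Tendsto (fun t => ‖η t - η T‖) (𝓝[<] T) (𝓝 0) := by
    have h3 := (ENNReal.tendsto_toReal (by simp : (0 : ℝ≥0∞) ≠ ∞)).comp h1
    simp only [Function.comp_def, ENNReal.toReal_zero] at h3
    refine h3.congr fun t => ?_
    exact ENNReal.toReal_ofReal (norm_nonneg _)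
  exact tendsto_iff_norm_sub_tendsto_zero.mpr h2
end

section
/- Let β ∈ (0,1), let M > 0, and let F_k : Δ → ℝ^{n×n} be measurable functions satisfying |F_k(t,s)| ≤ M^k (t-s)^{kβ-1} ∏_{j=1}^{k-1} B(β, jβ) for all k ≥ 1 and (t,s) ∈ Δ. Then for every δ > 0, the series Σ_{k=1}^∞ F_k(t,s) converges uniformly and absolutely on Δ_δ = {(t,s) ∈ Δ : t - s ≥ δ}. -/
open MeasureTheory Real Set Filter
open scoped ENNReal

/-- Telescoping product of Beta-function values. -/
lemma prod_beta_telescope (β : ℝ) (hβ0 : 0 < β) (k : ℕ) :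
    ∏ j ∈ Finset.Icc 1 k,
        Real.Gamma β * Real.Gamma ((j : ℝ) * β) / Real.Gamma (β + (j : ℝ) * β)
      = Real.Gamma β ^ (k + 1) / Real.Gamma (((k : ℝ) + 1) * β) := by
  induction k with
  | zero =>
      have h : ((0 : ℕ) : ℝ) + 1 = 1 := by norm_num
      simp only [h, one_mul]
      rw [Finset.Icc_eq_empty (by norm_num), Finset.prod_empty, pow_one,
        div_self (Real.Gamma_pos_of_pos hβ0).ne']
  | succ k ih =>
      rw [Finset.prod_Icc_succ_top (Nat.le_add_left 1 k), ih]
      have h1 : (0 : ℝ) < ((k : ℝ) + 1) * β := by positivity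
      have h2 : (0 : ℝ) < β + ((k : ℝ) + 1) * β := by positivity
      have hG1 := (Real.Gamma_pos_of_pos h1).ne'
      have hG2 := (Real.Gamma_pos_of_pos h2).ne'
      push_cast
      rw [show ((k : ℝ) + 1 + 1) * β = β + ((k : ℝ) + 1) * β by ring]
      field_simp
      ring

/-- Key Gamma inequality from log-convexity: `y Γ(y) ≤ Γ(y+β) (y+β)^(1-β)`. -/
lemma gamma_key {β y : ℝ} (hβ0 : 0 < β) (hβ1 : β < 1) (hy : 0 < y) :
    y * Real.Gamma y ≤ Real.Gamma (y + β) * (y + β) ^ (1 - β) := by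
  have hyβ : (0 : ℝ) < y + β := by linarith
  have hG1 : 0 < Real.Gamma (y + β) := Real.Gamma_pos_of_pos hyβ
  have hconv := Real.convexOn_log_Gamma.2 (Set.mem_Ioi.mpr hyβ)
      (Set.mem_Ioi.mpr (show (0:ℝ) < y + β + 1 by linarith)) hβ0.le
      (show (0:ℝ) ≤ 1 - β by linarith) (by ring)
  have harg : β • (y + β) + (1 - β) • (y + β + 1) = y + 1 := by
    simp only [smul_eq_mul]; ring
  rw [harg] at hconv
  simp only [Function.comp_apply, smul_eq_mul] at hconv
  rw [Real.Gamma_add_one hy.ne', Real.Gamma_add_one hyβ.ne',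
    Real.log_mul hyβ.ne' hG1.ne'] at hconv
  have hlog : Real.log (y * Real.Gamma y) ≤
      Real.log (Real.Gamma (y + β)) + (1 - β) * Real.log (y + β) := by
    nlinarith [hconv]
  have hpos : 0 < y * Real.Gamma y := mul_pos hy (Real.Gamma_pos_of_pos hy)
  have hexp := Real.exp_le_exp.mpr hlog
  rwa [Real.exp_log hpos, Real.exp_add, Real.exp_log hG1,
    show (1 - β) * Real.log (y + β) = Real.log (y + β) * (1 - β) from mul_comm _ _,
    ← Real.rpow_def_of_pos hyβ] at hexp

/-- Uniform and absolute convergence of the Neumann series Σ_k F_k(t,s) on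
    Δ_δ = {(t,s) : 0 ≤ s < t ≤ T, t - s ≥ δ}, given the Beta-function bounds. -/
theorem stmt_8 (n : ℕ) (T β M : ℝ)
    (hT : 0 < T) (hβ : β ∈ Set.Ioo (0:ℝ) 1) (hM : 0 < M)
    (F : ℕ → ℝ → ℝ → (EuclideanSpace ℝ (Fin n) →L[ℝ] EuclideanSpace ℝ (Fin n)))
    (hFbd : ∀ k ≥ 1, ∀ t s, 0 ≤ s → s < t → t ≤ T →
      ‖F k t s‖ ≤ M ^ k * (t - s) ^ ((k : ℝ) * β - 1) *
        ∏ j ∈ Finset.Icc 1 (k - 1),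
          Real.Gamma β * Real.Gamma ((j : ℝ) * β) / Real.Gamma (β + (j : ℝ) * β))
    (δ : ℝ) (hδ : 0 < δ) :
    (∀ z : ℝ × ℝ, (0 ≤ z.2 ∧ z.2 < z.1 ∧ z.1 ≤ T ∧ δ ≤ z.1 - z.2) →
      Summable (fun k : ℕ => ‖F (k + 1) z.1 z.2‖)) ∧
    TendstoUniformlyOn
      (fun N : ℕ => fun z : ℝ × ℝ => ∑ k ∈ Finset.range N, F (k + 1) z.1 z.2)
      (fun z : ℝ × ℝ => ∑' k : ℕ, F (k + 1) z.1 z.2)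
      atTop
      {z : ℝ × ℝ | 0 ≤ z.2 ∧ z.2 < z.1 ∧ z.1 ≤ T ∧ δ ≤ z.1 - z.2} := by
  obtain ⟨hβ0, hβ1⟩ := hβ
  have hΓβ : 0 < Real.Gamma β := Real.Gamma_pos_of_pos hβ0
  set c : ℝ := M * Real.Gamma β * T ^ β with hc
  have hc0 : 0 < c := by
    have : (0:ℝ) < T ^ β := Real.rpow_pos_of_pos hT β
    positivity
  set u : ℕ → ℝ := fun k => c ^ (k + 1) / (δ * Real.Gamma (((k : ℝ) + 1) * β))
    with hu
  have hupos : ∀ k, 0 < u k := by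
    intro k
    have h1 : (0 : ℝ) < ((k : ℝ) + 1) * β := by positivity
    have := Real.Gamma_pos_of_pos h1
    positivity
  -- Summability of the majorant series via the ratio test.
  have hsum : Summable u := by
    apply summable_of_ratio_norm_eventually_le (r := 1/2) (by norm_num)
    have htend : Tendsto (fun k : ℕ => (((k : ℝ) + 2) * β) ^ (-β)) atTop (nhds 0) := by
      apply (tendsto_rpow_neg_atTop hβ0).comp
      exact Tendsto.atTop_mul_const hβ0
        (tendsto_atTop_add_const_right _ 2 tendsto_natCast_atTop_atTop)
    have hev : ∀ᶠ k : ℕ in atTop, (((k : ℝ) + 2) * β) ^ (-β) < β / (8 * c) :=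
      htend.eventually (gt_mem_nhds (by positivity))
    filter_upwards [hev] with k hk
    set y : ℝ := ((k : ℝ) + 1) * β with hy
    have hy0 : 0 < y := by positivity
    have hyβ : y + β = ((k : ℝ) + 2) * β := by rw [hy]; ring
    have hyβ0 : 0 < y + β := by linarith
    have hG1 : 0 < Real.Gamma y := Real.Gamma_pos_of_pos hy0
    have hG2 : 0 < Real.Gamma (y + β) := Real.Gamma_pos_of_pos hyβ0
    -- `2c (y+β)^(1-β) ≤ y`
    have hpow : (y + β) ^ ((1:ℝ) - β) = (y + β) * (y + β) ^ (-β) := by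
      rw [show (1:ℝ) - β = 1 + (-β) by ring, Real.rpow_add hyβ0, Real.rpow_one]
    have hstep : 2 * c * (y + β) ^ ((1:ℝ) - β) ≤ y := by
      rw [hpow]
      have h1 : (y + β) ^ (-β) ≤ β / (8 * c) := by rw [hyβ]; exact hk.le
      have h2 : 0 ≤ (y + β) ^ (-β) := Real.rpow_nonneg hyβ0.le _
      have h3 : 2 * c * ((y + β) * (y + β) ^ (-β)) ≤ 2 * c * ((y + β) * (β / (8 * c))) := by
        have := mul_le_mul_of_nonneg_left h1 hyβ0.le
        nlinarith
      have h4 : 2 * c * ((y + β) * (β / (8 * c))) = (y + β) * β / 4 := by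
        field_simp; ring
      have h5 : (y + β) * β / 4 ≤ y := by
        rw [hyβ, hy]
        nlinarith [Nat.cast_nonneg (α := ℝ) k, hβ0, hβ1]
      linarith
    -- `2c Γ(y) ≤ Γ(y+β)`
    have hkey : 2 * c * Real.Gamma y ≤ Real.Gamma (y + β) := by
      have hgk := gamma_key hβ0 hβ1 hy0
      have hp : (0:ℝ) < (y + β) ^ ((1:ℝ) - β) := Real.rpow_pos_of_pos hyβ0 _
      rw [← mul_le_mul_iff_of_pos_right hp]
      calc 2 * c * Real.Gamma y * (y + β) ^ ((1:ℝ) - β)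
          = Real.Gamma y * (2 * c * (y + β) ^ ((1:ℝ) - β)) := by ring
        _ ≤ Real.Gamma y * y := by
            exact mul_le_mul_of_nonneg_left hstep hG1.le
        _ = y * Real.Gamma y := mul_comm _ _
        _ ≤ Real.Gamma (y + β) * (y + β) ^ ((1:ℝ) - β) := hgk
    -- conclude the ratio bound
    have hcast : ((k + 1 : ℕ) : ℝ) + 1 = (k : ℝ) + 2 := by push_cast; ring
    rw [Real.norm_of_nonneg (hupos _).le, Real.norm_of_nonneg (hupos _).le, hu]
    simp only [hcast]
    rw [← hyβ, ← hy]
    calc c ^ (k + 1 + 1) / (δ * Real.Gamma (y + β))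
        ≤ c ^ (k + 1 + 1) / (δ * (2 * c * Real.Gamma y)) := by
          gcongr
      _ = 1 / 2 * (c ^ (k + 1) / (δ * Real.Gamma y)) := by
          rw [pow_succ]
          field_simp
  -- The uniform bound on the set.
  have hbd : ∀ (k : ℕ) (z : ℝ × ℝ),
      z ∈ {z : ℝ × ℝ | 0 ≤ z.2 ∧ z.2 < z.1 ∧ z.1 ≤ T ∧ δ ≤ z.1 - z.2} →
      ‖F (k + 1) z.1 z.2‖ ≤ u k := by
    rintro k ⟨t, s⟩ ⟨h1, h2, h3, h4⟩
    simp only at h1 h2 h3 h4 ⊢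
    have hx0 : (0:ℝ) < t - s := by linarith
    have hxT : t - s ≤ T := by linarith
    have hbound := hFbd (k + 1) (Nat.le_add_left 1 k) t s h1 h2 h3
    rw [Nat.add_sub_cancel, prod_beta_telescope β hβ0 k] at hbound
    have hcast : ((k + 1 : ℕ) : ℝ) = (k : ℝ) + 1 := by push_cast; ring
    rw [hcast] at hbound
    have hG : 0 < Real.Gamma (((k : ℝ) + 1) * β) :=
      Real.Gamma_pos_of_pos (by positivity)
    have hmid : (t - s) ^ (((k : ℝ) + 1) * β - 1) ≤ (T ^ β) ^ (k + 1) / δ := by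
      have e1 : (t - s) ^ (((k : ℝ) + 1) * β - 1)
          = (t - s) ^ (((k : ℝ) + 1) * β) / (t - s) := by
        rw [Real.rpow_sub hx0, Real.rpow_one]
      rw [e1]
      have e2 : (t - s) ^ (((k : ℝ) + 1) * β) ≤ T ^ (((k : ℝ) + 1) * β) :=
        Real.rpow_le_rpow hx0.le hxT (by positivity)
      have e3 : T ^ (((k : ℝ) + 1) * β) = (T ^ β) ^ (k + 1) := by
        rw [show ((k : ℝ) + 1) * β = β * ((k + 1 : ℕ) : ℝ) by push_cast; ring,
          Real.rpow_mul hT.le, Real.rpow_natCast]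
      have := div_le_div₀ (by positivity) (e3 ▸ e2) hδ h4
      linarith [this]
    calc ‖F (k + 1) t s‖
        ≤ M ^ (k + 1) * (t - s) ^ (((k : ℝ) + 1) * β - 1) *
            (Real.Gamma β ^ (k + 1) / Real.Gamma (((k : ℝ) + 1) * β)) := hbound
      _ ≤ M ^ (k + 1) * ((T ^ β) ^ (k + 1) / δ) *
            (Real.Gamma β ^ (k + 1) / Real.Gamma (((k : ℝ) + 1) * β)) := by
          gcongr
      _ = u k := by
          rw [hu]
          simp only
          rw [hc, mul_pow, mul_pow]
          field_simp
  constructor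
  · intro z hz
    exact Summable.of_nonneg_of_le (fun k => norm_nonneg _)
      (fun k => hbd k z hz) hsum
  · exact tendstoUniformlyOn_tsum_nat hsum hbd
end
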